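/- Let G be a finite simple graph on n ≥ 2 vertices with m edges, density d = 2m/(n(n−1)) satisfying m ≥ 1 and d < 1, and suppose at least x of the vertices have degree exactly a, where 0 ≤ x < n. Then the normalised degree variance satisfies v̄(G) ≥ (1/(1−d))·x·(a·n − 2m)²/(n²·(n−x)·m). -/

import Mathlib

/-- The degree variance of a finite simple graph `G` on `n` vertices with `m` edges:
`v(G) = (1/(n-1)) · ∑ i, (k_i - 2m/n)^2`. -/
noncomputable def degVar {n : ℕ} (G : SimpleGraph (Fin n)) [DecidableRel G.Adj] : ℝ :=
  (1 / ((n : ℝ) - 1)) *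
    ∑ i, ((G.degree i : ℝ) - 2 * (G.edgeFinset.card : ℝ) / n) ^ 2

/-- The normalised degree variance `v̄(G) = ((n-1)/(n·m·(1-d))) · v(G)`, where
`d = 2m/(n(n-1))` is the density. -/
noncomputable def normDegVar {n : ℕ} (G : SimpleGraph (Fin n)) [DecidableRel G.Adj] : ℝ :=
  ((n : ℝ) - 1) /
      ((n : ℝ) * (G.edgeFinset.card : ℝ) *
        (1 - 2 * (G.edgeFinset.card : ℝ) / ((n : ℝ) * ((n : ℝ) - 1)))) *
    degVar G

/-- **Lower bound for the normalised degree variance of graphs with a fixed proportion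
of vertices of a given degree.**  Let `G` be a finite simple graph on `n ≥ 2` vertices
with `m` edges, density `d = 2m/(n(n-1))` satisfying `m ≥ 1` and `d < 1`, and suppose at
least `x` of the vertices have degree exactly `a`, where `0 ≤ x < n`.  Then
`v̄(G) ≥ (1/(1-d)) · x·(a·n - 2m)²/(n²·(n-x)·m)`. -/
theorem normDegVar_ge (n : ℕ) (hn : 2 ≤ n) (G : SimpleGraph (Fin n))
    [DecidableRel G.Adj] (m x a : ℕ) (hm : m = G.edgeFinset.card) (hm1 : 1 ≤ m)
    (hd : 2 * m < n * (n - 1)) (hx : x < n)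
    (hxa : x ≤ (Finset.univ.filter fun i => G.degree i = a).card) :
    (1 / (1 - 2 * (m : ℝ) / ((n : ℝ) * ((n : ℝ) - 1)))) *
        ((x : ℝ) * ((a : ℝ) * (n : ℝ) - 2 * (m : ℝ)) ^ 2
          / ((n : ℝ) ^ 2 * ((n : ℝ) - (x : ℝ)) * (m : ℝ)))
      ≤ normDegVar G := by
  classical
  obtain ⟨T, hTsub, hTcard⟩ := Finset.exists_subset_card_eq hxa
  set N := (n : ℝ) with hN
  set M := (m : ℝ) with hM
  have hN2 : (2:ℝ) ≤ N := by rw [hN]; exact_mod_cast hn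
  have hN0 : (0:ℝ) < N := by linarith
  have hN1 : (0:ℝ) < N - 1 := by linarith
  have hM1 : (1:ℝ) ≤ M := by rw [hM]; exact_mod_cast hm1
  have hM0 : (0:ℝ) < M := by linarith
  have hNx : (x:ℝ) < N := by rw [hN]; exact_mod_cast hx
  have hNx0 : (0:ℝ) < N - x := by linarith
  have h2m : 2 * M < N * (N - 1) := by
    have : ((2 * m : ℕ) : ℝ) < ((n * (n - 1) : ℕ) : ℝ) := by exact_mod_cast hd
    have hsub : ((n - 1 : ℕ) : ℝ) = N - 1 := by
      have : 1 ≤ n := by omega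
      push_cast [Nat.cast_sub this]; ring
    push_cast at this
    rw [hsub] at this
    linarith
  have hden : (0:ℝ) < 1 - 2 * M / (N * (N - 1)) := by
    rw [sub_pos, div_lt_one (by positivity)]
    exact h2m
  have hsum : ∑ i, (G.degree i : ℝ) = 2 * M := by
    rw [hM, hm]
    exact_mod_cast G.sum_degrees_eq_twice_card_edges
  set c : ℝ := (a : ℝ) - 2 * M / N with hc
  set f : Fin n → ℝ := fun i => (G.degree i : ℝ) - 2 * M / N with hf
  have hTdeg : ∀ i ∈ T, f i = c := by
    intro i hi
    have := hTsub hi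
    simp only [Finset.mem_filter] at this
    simp [hf, hc, this.2]
  have h1 : ∑ i ∈ T, f i = x * c := by
    rw [Finset.sum_congr rfl hTdeg, Finset.sum_const, hTcard, nsmul_eq_mul]
  have h0 : ∑ i, f i = 0 := by
    simp only [hf, Finset.sum_sub_distrib, hsum, Finset.sum_const, Finset.card_univ,
      Fintype.card_fin, nsmul_eq_mul]
    field_simp
    rw [hN]; ring
  have h2 : ∑ i ∈ Finset.univ \ T, f i = -(x * c) := by
    have := Finset.sum_sdiff (f := f) (Finset.subset_univ T)
    rw [h0] at this
    linarith [h1, this]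
  have hcard : ((Finset.univ \ T).card : ℝ) = N - x := by
    rw [Finset.card_sdiff, Finset.inter_univ, hTcard]
    have hxn : x ≤ n := le_of_lt hx
    rw [Finset.card_univ, Fintype.card_fin, Nat.cast_sub hxn, hN]
  have h3 : (x * c) ^ 2 ≤ (N - x) * ∑ i ∈ Finset.univ \ T, f i ^ 2 := by
    have := sq_sum_le_card_mul_sum_sq (s := Finset.univ \ T) (f := f)
    rw [h2] at this
    rw [← hcard]
    calc (x * c) ^ 2 = (-(x*c))^2 := by ring
    _ ≤ _ := this
  have hsumT : ∑ i ∈ T, f i ^ 2 = x * c ^ 2 := by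
    rw [Finset.sum_congr rfl (fun i hi => by rw [hTdeg i hi]), Finset.sum_const, hTcard,
      nsmul_eq_mul]
  have hsplit : ∑ i, f i ^ 2 = x * c ^ 2 + ∑ i ∈ Finset.univ \ T, f i ^ 2 := by
    rw [← Finset.sum_sdiff (f := fun i => f i ^ 2) (Finset.subset_univ T), hsumT]; ring
  have hS : x * c ^ 2 + (x * c) ^ 2 / (N - x) ≤ ∑ i, f i ^ 2 := by
    rw [hsplit]
    have : (x * c) ^ 2 / (N - x) ≤ ∑ i ∈ Finset.univ \ T, f i ^ 2 :=
      (div_le_iff₀ hNx0).2 (by linarith [h3])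
    linarith
  have hceq : c = ((a:ℝ) * N - 2 * M) / N := by rw [hc]; field_simp
  have key : (x:ℝ) * ((a:ℝ) * N - 2 * M) ^ 2 / (N * (N - x)) ≤ ∑ i, f i ^ 2 := by
    refine le_trans (le_of_eq ?_) hS
    rw [hceq]
    field_simp
    ring
  have hmcast : (G.edgeFinset.card : ℝ) = M := by rw [hM, hm]
  rw [normDegVar, degVar, hmcast]
  have heq : ∑ i, ((G.degree i : ℝ) - 2 * M / N) ^ 2 = ∑ i, f i ^ 2 := rfl
  rw [heq]
  set S := ∑ i, f i ^ 2 with hSdef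
  have hD : (0:ℝ) < N * M * (1 - 2 * M / (N * (N - 1))) := by positivity
  have lhs_eq : 1 / (1 - 2 * M / (N * (N - 1))) *
      ((x:ℝ) * ((a:ℝ) * N - 2 * M) ^ 2 / (N ^ 2 * (N - (x:ℝ)) * M))
      = ((x:ℝ) * ((a:ℝ) * N - 2 * M) ^ 2 / (N * (N - (x:ℝ)))) /
        (N * M * (1 - 2 * M / (N * (N - 1)))) := by
    field_simp
  rw [lhs_eq]
  set D := N * M * (1 - 2 * M / (N * (N - 1))) with hDdef
  have hDne : D ≠ 0 := ne_of_gt hD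
  have rhs_eq : (N - 1) / D * (1 / (N - 1) * S) = S / D := by
    field_simp
  rw [rhs_eq]
  gcongr
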